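/- arXiv:2204.09842 — 2 statements merged into one kernel-verified Lean document; each statement's English description precedes it below -/
import Mathlib

section
/- For every nonnegative integer t, the graph G = K_{3+t} \vee ((4+2t)K_2) (the join of a complete graph on 3+t vertices with the disjoint union of 4+2t copies of K_2) satisfies \delta(G) = (\alpha(G) + 4)/2, namely \delta(G) = 4 + t and \alpha(G) = 4 + 2t, but G is not a P_{\geq 3}-factor uniform graph. -/
open SimpleGraph

section Defs

variable {V : Type*} {α β : Type*}

/-- A graph is *factor-critical* if deleting any vertex leaves a graph
with a perfect matching. -/
def FactorCritical (G : SimpleGraph V) : Prop :=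
  ∀ v : V, ∃ M : (G.induce {u | u ≠ v}).Subgraph, M.IsPerfectMatching

/-- A *sun* is `K₁`, `K₂`, or a graph obtained from a factor-critical graph `R`
with vertex set `Y = {y₁, …, yₙ}` by adding `n` new vertices `x₁, …, xₙ` and the
pendant edges `y₁x₁, …, yₙxₙ`. -/
def IsSun (G : SimpleGraph V) : Prop :=
  (Nat.card V = 1) ∨ (Nat.card V = 2 ∧ G.Connected) ∨
  (∃ Y : Set V, Y.Nonempty ∧ FactorCritical (G.induce Y) ∧
    ∃ f : (Yᶜ : Set V) ≃ Y, ∀ x : (Yᶜ : Set V), G.neighborSet ↑x = {(↑(f x) : V)})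

/-- `sunCount G` is the number of connected components of `G` that are suns. -/
noncomputable def sunCount (G : SimpleGraph V) : ℕ :=
  Nat.card {c : G.ConnectedComponent // IsSun (G.induce c.supp)}

/-- Number of isolated vertices of a graph. -/
noncomputable def isolatedCount (G : SimpleGraph V) : ℕ :=
  {v : V | ∀ w : V, ¬ G.Adj v w}.ncard

/-- A set of vertices is independent if no two of its vertices are adjacent. -/
def IndepSet (G : SimpleGraph V) (A : Set V) : Prop :=
  A.Pairwise fun u v => ¬ G.Adj u v

/-- The independence number of a graph: the maximum size of an independent set. -/
noncomputable def indepNum (G : SimpleGraph V) : ℕ :=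
  sSup {n | ∃ A : Set V, IndepSet G A ∧ A.ncard = n}

/-- The neighborhood `N_G(A)` of a set `A` of vertices: the union of the
neighborhoods of the vertices of `A`. -/
def neighborSetOf (G : SimpleGraph V) (A : Set V) : Set V :=
  {v | ∃ a ∈ A, G.Adj a v}

/-- `H` is a `P_{≥3}`-factor of `G`: a spanning subgraph of `G` each of whose
connected components is a path on at least `3` vertices. -/
def IsPathFactor (G H : SimpleGraph V) : Prop :=
  H ≤ G ∧ ∀ c : H.ConnectedComponent,
    ∃ n : ℕ, 3 ≤ n ∧ Nonempty ((H.induce c.supp) ≃g pathGraph n)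

/-- A connected graph `G` is a `P_{≥3}`-factor covered graph if every edge of `G`
is contained in some `P_{≥3}`-factor of `G`. -/
def PathFactorCovered (G : SimpleGraph V) : Prop :=
  G.Connected ∧ ∀ e ∈ G.edgeSet, ∃ H : SimpleGraph V, IsPathFactor G H ∧ e ∈ H.edgeSet

/-- A graph `G` is a `P_{≥3}`-factor uniform graph if `G - e` is a
`P_{≥3}`-factor covered graph for every edge `e` of `G`. -/
def PathFactorUniform (G : SimpleGraph V) : Prop :=
  ∀ e ∈ G.edgeSet, PathFactorCovered (G.deleteEdges {e})

/-- The parameter `ε(X)` from Zhou–Zhang's characterization of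
`P_{≥3}`-factor covered graphs. -/
noncomputable def eps (G : SimpleGraph V) (X : Set V) : ℕ := by
  classical
  exact if ¬ IndepSet G X then 2
    else if X.Nonempty ∧ ∃ c : (G.induce Xᶜ).ConnectedComponent,
        ¬ IsSun ((G.induce Xᶜ).induce c.supp) then 1
    else 0

/-- A graph is 2-edge-connected if it is connected and stays connected after
the deletion of any single edge. -/
def TwoEdgeConnected (G : SimpleGraph V) : Prop :=
  G.Connected ∧ ∀ e ∈ G.edgeSet, (G.deleteEdges {e}).Connected

/-- A graph is `k`-connected if it has more than `k` vertices and remains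
connected after deleting any fewer than `k` vertices. -/
def KConnected [Fintype V] (k : ℕ) (G : SimpleGraph V) : Prop :=
  k < Fintype.card V ∧ ∀ S : Set V, S.ncard < k → (G.induce Sᶜ).Connected

/-- The join `G₁ ∨ G₂` of two graphs: take disjoint copies of `G₁` and `G₂`
and add all edges between them. -/
def graphJoin (G : SimpleGraph α) (H : SimpleGraph β) : SimpleGraph (α ⊕ β) where
  Adj x y :=
    match x, y with
    | Sum.inl a, Sum.inl b => G.Adj a b
    | Sum.inr a, Sum.inr b => H.Adj a b
    | Sum.inl _, Sum.inr _ => True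
    | Sum.inr _, Sum.inl _ => True
  symm := by
    constructor
    rintro (a | a) (b | b) h
    · exact G.adj_symm h
    · trivial
    · trivial
    · exact H.adj_symm h
  loopless := by
    constructor
    rintro (a | a) h
    · exact G.irrefl h
    · exact H.irrefl h

/-- The disjoint union of two graphs. -/
def graphSum (G : SimpleGraph α) (H : SimpleGraph β) : SimpleGraph (α ⊕ β) where
  Adj x y :=
    match x, y with
    | Sum.inl a, Sum.inl b => G.Adj a b
    | Sum.inr a, Sum.inr b => H.Adj a b
    | _, _ => False
  symm := by
    constructor
    rintro (a | a) (b | b) h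
    · exact G.adj_symm h
    · exact h.elim
    · exact h.elim
    · exact H.adj_symm h
  loopless := by
    constructor
    rintro (a | a) h
    · exact G.irrefl h
    · exact H.irrefl h

/-- `mK2 m` is the disjoint union of `m` copies of `K₂`. -/
def mK2 (m : ℕ) : SimpleGraph (Fin m × Fin 2) where
  Adj p q := p.1 = q.1 ∧ p.2 ≠ q.2
  symm := by constructor; rintro p q ⟨h1, h2⟩; exact ⟨h1.symm, h2.symm⟩
  loopless := by constructor; rintro p ⟨h1, h2⟩; exact h2 rfl

end Defs


open Finset in
lemma filter_sum_split {A B : Type*} [Fintype A] [Fintype B] (p : A ⊕ B → Prop) [DecidablePred p] :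
    (Finset.univ.filter p).card =
    (Finset.univ.filter fun a => p (Sum.inl a)).card
      + (Finset.univ.filter fun b => p (Sum.inr b)).card := by
  simp only [Finset.card_filter]
  exact Fintype.sum_sum_type _

lemma natCard_eq_filter {A : Type*} [Fintype A] (p : A → Prop) [DecidablePred p] :
    Nat.card {x // p x} = (Finset.univ.filter p).card := by
  rw [Nat.card_eq_fintype_card, Fintype.card_subtype]

lemma pg_nbr_le {n : ℕ} (u : Fin n) : Nat.card {v : Fin n // (pathGraph n).Adj u v} ≤ 2 := by
  have h : Function.Injective (fun v : {v : Fin n // (pathGraph n).Adj u v} =>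
      (if (v : Fin n).val < u.val then 0 else 1 : Fin 2)) := by
    rintro ⟨v, hv⟩ ⟨w, hw⟩ h
    rw [pathGraph_adj] at hv hw
    simp only at h
    ext
    split_ifs at h with h1 h2 h2 <;> simp_all <;> omega
  calc Nat.card {v : Fin n // (pathGraph n).Adj u v} ≤ Nat.card (Fin 2) :=
        Nat.card_le_card_of_injective _ h
    _ = 2 := by simp

lemma pg_nbr_pos {n : ℕ} (hn : 3 ≤ n) (u : Fin n) :
    0 < Nat.card {v : Fin n // (pathGraph n).Adj u v} := by
  have : Nonempty {v : Fin n // (pathGraph n).Adj u v} := by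
    by_cases h : u.val + 1 < n
    · exact ⟨⟨⟨u.val + 1, h⟩, by rw [pathGraph_adj]; left; rfl⟩⟩
    · exact ⟨⟨⟨u.val - 1, by omega⟩, by rw [pathGraph_adj]; right; simp; omega⟩⟩
  have : Finite {v : Fin n // (pathGraph n).Adj u v} := Subtype.finite
  exact Nat.card_pos

lemma supp_ncard {V : Type*} [Finite V] {H : SimpleGraph V} {c : H.ConnectedComponent} {n : ℕ}
    (φ : (H.induce c.supp) ≃g pathGraph n) : c.supp.ncard = n := by
  have := Nat.card_congr φ.toEquiv
  rwa [Nat.card_coe_set_eq, Nat.card_eq_fintype_card, Fintype.card_fin] at this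

lemma nbr_card_eq {V : Type*} {H : SimpleGraph V} {c : H.ConnectedComponent} {n : ℕ}
    (φ : (H.induce c.supp) ≃g pathGraph n) (v : V) (hv : v ∈ c.supp) :
    Nat.card {y : V // H.Adj v y} =
      Nat.card {j : Fin n // (pathGraph n).Adj (φ ⟨v, hv⟩) j} := by
  have hmem : ∀ y : V, H.Adj v y → y ∈ c.supp := by
    intro y hy
    rw [SimpleGraph.ConnectedComponent.mem_supp_iff]
    rw [SimpleGraph.ConnectedComponent.mem_supp_iff] at hv
    rw [← hv]
    exact SimpleGraph.ConnectedComponent.sound hy.symm.reachable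
  have e1 : {y : V // H.Adj v y} ≃ {w : c.supp // (H.induce c.supp).Adj ⟨v, hv⟩ w} :=
    { toFun := fun y => ⟨⟨y.1, hmem y.1 y.2⟩, y.2⟩
      invFun := fun w => ⟨w.1.1, w.2⟩
      left_inv := fun y => rfl
      right_inv := fun w => rfl }
  have e2 : {w : c.supp // (H.induce c.supp).Adj ⟨v, hv⟩ w} ≃
      {j : Fin n // (pathGraph n).Adj (φ ⟨v, hv⟩) j} :=
    φ.toEquiv.subtypeEquiv (fun w =>
      ⟨fun h => φ.map_adj_iff.mpr h, fun h => φ.map_adj_iff.mp h⟩)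
  exact Nat.card_congr (e1.trans e2)

lemma comp_ge_three {V : Type*} [Finite V] {H : SimpleGraph V} {a b : V}
    (hab : H.Adj a b) (ha : ∀ y, H.Adj a y → y = b) (hb : ∀ y, H.Adj b y → y = a)
    (hsupp : 3 ≤ ((H.connectedComponentMk a).supp).ncard) : False := by
  have hwalk : ∀ {u v : V} (_ : H.Walk u v), (u = a ∨ u = b) → (v = a ∨ v = b) := by
    intro u v p
    induction p with
    | nil => exact id
    | cons h p ih =>
      rintro (rfl | rfl)
      · exact ih (Or.inr (ha _ h))
      · exact ih (Or.inl (hb _ h))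
  have hsub : (H.connectedComponentMk a).supp ⊆ {a, b} := by
    intro v hv
    rw [SimpleGraph.ConnectedComponent.mem_supp_iff, SimpleGraph.ConnectedComponent.eq] at hv
    obtain ⟨p⟩ := hv.symm
    exact hwalk p (Or.inl rfl)
  have := Set.ncard_le_ncard hsub (Set.toFinite _)
  have h2 : ({a, b} : Set V).ncard ≤ 2 := by
    apply (Set.ncard_insert_le _ _).trans
    simp
  omega


theorem aux_part1 (t : ℕ) :
    letI G := graphJoin (completeGraph (Fin (3 + t))) (mK2 (4 + 2 * t))
    @SimpleGraph.minDegree _ G _ (Classical.decRel _) = 4 + t := by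
  set G := graphJoin (completeGraph (Fin (3 + t))) (mK2 (4 + 2 * t)) with hG
  letI : DecidableRel G.Adj := Classical.decRel _
  have hadj_ll : ∀ a b : Fin (3+t), G.Adj (Sum.inl a) (Sum.inl b) ↔ a ≠ b := by
    intro a b; rfl
  have hadj_lr : ∀ (a : Fin (3+t)) b, G.Adj (Sum.inl a) (Sum.inr b) ↔ True := by
    intro a b; rfl
  have hadj_rl : ∀ a (b : Fin (3+t)), G.Adj (Sum.inr a) (Sum.inl b) ↔ True := by
    intro a b; rfl
  have hadj_rr : ∀ a b, G.Adj (Sum.inr a) (Sum.inr b) ↔ (a.1 = b.1 ∧ a.2 ≠ b.2) := by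
    intro a b; rfl
  have hdeg : ∀ v, G.degree v = (Finset.univ.filter (G.Adj v)).card := by
    intro v; rw [← neighborFinset_eq_filter]; rfl
  have hdegR : ∀ (i : Fin (4 + 2*t)) (x : Fin 2), G.degree (Sum.inr (i, x)) = 4 + t := by
    intro i x
    rw [hdeg, filter_sum_split]
    have h1 : (Finset.univ.filter fun a : Fin (3+t) => G.Adj (Sum.inr (i,x)) (Sum.inl a)).card
        = 3 + t := by
      simp only [hadj_rl, Finset.filter_true, Finset.card_univ, Fintype.card_fin]
    have h2 : (Finset.univ.filter fun b : Fin (4+2*t) × Fin 2 =>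
        G.Adj (Sum.inr (i,x)) (Sum.inr b)).card = 1 := by
      have : (Finset.univ.filter fun b : Fin (4+2*t) × Fin 2 =>
          G.Adj (Sum.inr (i,x)) (Sum.inr b)) = {(i, x.rev)} := by
        ext ⟨j, y⟩
        simp only [Finset.mem_filter, Finset.mem_univ, true_and, hadj_rr, Finset.mem_singleton,
          Prod.mk.injEq]
        constructor
        · rintro ⟨rfl, hy⟩
          refine ⟨rfl, ?_⟩
          fin_cases x <;> fin_cases y <;> simp_all <;> rfl
        · rintro ⟨rfl, rfl⟩
          refine ⟨rfl, ?_⟩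
          fin_cases x <;> decide
      rw [this, Finset.card_singleton]
    omega
  have hdegL : ∀ a : Fin (3+t), G.degree (Sum.inl a) = 10 + 5*t := by
    intro a
    rw [hdeg, filter_sum_split]
    have h1 : (Finset.univ.filter fun b : Fin (3+t) => G.Adj (Sum.inl a) (Sum.inl b)).card
        = 2 + t := by
      have : (Finset.univ.filter fun b : Fin (3+t) => G.Adj (Sum.inl a) (Sum.inl b))
          = Finset.univ.erase a := by
        ext b
        simp [hadj_ll, eq_comm, Ne]
      rw [this, Finset.card_erase_of_mem (Finset.mem_univ a), Finset.card_univ]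
      simp
    have h2 : (Finset.univ.filter fun b : Fin (4+2*t) × Fin 2 =>
        G.Adj (Sum.inl a) (Sum.inr b)).card = 8 + 4*t := by
      simp only [hadj_lr, Finset.filter_true, Finset.card_univ]
      simp [Fintype.card_prod]
      ring
    omega
  apply le_antisymm
  · have := minDegree_le_degree (G := G) (Sum.inr ((⟨0, by omega⟩ : Fin (4+2*t)), 0))
    rwa [hdegR] at this
  · haveI : Nonempty (Fin (3 + t) ⊕ Fin (4 + 2 * t) × Fin 2) := ⟨Sum.inl ⟨0, by omega⟩⟩
    apply le_minDegree_of_forall_le_degree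
    rintro (a | ⟨i, x⟩)
    · rw [hdegL]; omega
    · rw [hdegR]

theorem aux_part2 (t : ℕ) :
    _root_.indepNum (graphJoin (completeGraph (Fin (3 + t))) (mK2 (4 + 2 * t))) = 4 + 2 * t := by
  set G := graphJoin (completeGraph (Fin (3 + t))) (mK2 (4 + 2 * t)) with hG
  have hub : ∀ n ∈ {n | ∃ A : Set _, IndepSet G A ∧ A.ncard = n}, n ≤ 4 + 2 * t := by
    rintro n ⟨A, hA, rfl⟩
    by_cases hl : ∃ a : Fin (3+t), Sum.inl a ∈ A
    · obtain ⟨a, ha⟩ := hl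
      have hsub : A ⊆ {Sum.inl a} := by
        intro v hv
        by_contra hne
        simp only [Set.mem_singleton_iff] at hne
        have hadj : G.Adj (Sum.inl a) v := by
          match v with
          | Sum.inl b =>
            have : a ≠ b := fun h => hne (by rw [h])
            exact this
          | Sum.inr b => trivial
        exact hA ha hv (Ne.symm hne) hadj
      calc A.ncard ≤ ({Sum.inl a} : Set _).ncard :=
            Set.ncard_le_ncard hsub (Set.toFinite _)
        _ = 1 := Set.ncard_singleton _
        _ ≤ 4 + 2*t := by omega
    · push_neg at hl
      have hinj : Set.InjOn
          (Sum.elim (fun _ => (⟨0, by omega⟩ : Fin (4+2*t))) Prod.fst :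
            Fin (3+t) ⊕ Fin (4+2*t) × Fin 2 → Fin (4+2*t)) A := by
          rintro (a | ⟨i, x⟩) hu (b | ⟨j, y⟩) hv huv
          · exact absurd hu (hl a)
          · exact absurd hu (hl a)
          · exact absurd hv (hl b)
          · simp only [Sum.elim_inr] at huv
            subst huv
            by_cases hxy : x = y
            · rw [hxy]
            · exfalso
              have hne : (Sum.inr (i, x) : Fin (3+t) ⊕ Fin (4+2*t) × Fin 2) ≠ Sum.inr (i, y) := by
                simp [hxy]
              exact hA hu hv hne ⟨rfl, hxy⟩
      have := Set.ncard_le_ncard_of_injOn _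
        (fun a _ => Set.mem_univ _)
        hinj
        (Set.finite_univ)
      simpa [Set.ncard_univ] using this
  have hmem : (4 + 2*t) ∈ {n | ∃ A : Set _, IndepSet G A ∧ A.ncard = n} := by
    refine ⟨(fun i : Fin (4+2*t) => (Sum.inr (i, 0) : Fin (3+t) ⊕ Fin (4+2*t) × Fin 2)) '' Set.univ,
      ?_, ?_⟩
    · rintro u ⟨i, -, rfl⟩ v ⟨j, -, rfl⟩ hne hadj
      exact hadj.2 rfl
    · rw [Set.ncard_image_of_injective _ (by intro i j h; simpa using h)]
      simp [Set.ncard_univ]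
  apply le_antisymm
  · exact csSup_le ⟨4 + 2*t, hmem⟩ hub
  · exact le_csSup ⟨4 + 2*t, hub⟩ hmem

theorem aux_part4 (t : ℕ) :
    ¬ PathFactorUniform (graphJoin (completeGraph (Fin (3 + t))) (mK2 (4 + 2 * t))) := by
  classical
  set G := graphJoin (completeGraph (Fin (3 + t))) (mK2 (4 + 2 * t)) with hG
  intro hu
  set i0 : Fin (4 + 2*t) := ⟨0, by omega⟩ with hi0
  set a0 : Fin (3 + t) := ⟨0, by omega⟩ with ha0
  set a1 : Fin (3 + t) := ⟨1, by omega⟩ with ha1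
  have he : s(Sum.inr (i0, 0), Sum.inr (i0, 1)) ∈ G.edgeSet := by
    rw [SimpleGraph.mem_edgeSet]
    have h01 : (0 : Fin 2) ≠ 1 := by decide
    exact ⟨rfl, h01⟩
  have hcov := hu _ he
  set G' := G.deleteEdges {s(Sum.inr (i0, 0), Sum.inr (i0, 1))} with hG'
  have hf : s(Sum.inl a0, Sum.inl a1) ∈ G'.edgeSet := by
    rw [SimpleGraph.mem_edgeSet, SimpleGraph.deleteEdges_adj]
    constructor
    · show a0 ≠ a1
      simp [ha0, ha1, Fin.ext_iff]
    · simp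
  obtain ⟨H, ⟨hle, hcomp⟩, hfe⟩ := hcov.2 _ hf
  rw [SimpleGraph.mem_edgeSet] at hfe
  -- degree bounds
  have hvmem : ∀ v, v ∈ (H.connectedComponentMk v).supp :=
    fun v => (SimpleGraph.ConnectedComponent.mem_supp_iff _ _).mpr rfl
  have hdeg1 : ∀ v, 1 ≤ Nat.card {y // H.Adj v y} := by
    intro v
    obtain ⟨n, hn3, ⟨φ⟩⟩ := hcomp (H.connectedComponentMk v)
    rw [nbr_card_eq φ v (hvmem v)]
    exact pg_nbr_pos hn3 _
  have hdeg2 : ∀ v, Nat.card {y // H.Adj v y} ≤ 2 := by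
    intro v
    obtain ⟨n, hn3, ⟨φ⟩⟩ := hcomp (H.connectedComponentMk v)
    rw [nbr_card_eq φ v (hvmem v)]
    exact pg_nbr_le _
  -- structural facts about inr-inr adjacency in H
  have hstruct : ∀ (i : Fin (4+2*t)) (x : Fin 2) (b : Fin (4+2*t) × Fin 2),
      H.Adj (Sum.inr (i, x)) (Sum.inr b) → b.1 = i ∧ b.2 ≠ x := by
    intro i x b h
    have := ((SimpleGraph.deleteEdges_adj).mp (hle h)).1
    exact ⟨(this.1).symm, fun hb => this.2 (by rw [hb])⟩
  have hpair0 : ¬ H.Adj (Sum.inr (i0, 0)) (Sum.inr (i0, 1)) := by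
    intro h
    have := ((SimpleGraph.deleteEdges_adj).mp (hle h)).2
    simp at this
  -- counts
  set cL : (Fin (3+t) ⊕ Fin (4+2*t) × Fin 2) → ℕ :=
    fun v => (Finset.univ.filter fun a : Fin (3+t) => H.Adj v (Sum.inl a)).card with hcL
  set cR : (Fin (3+t) ⊕ Fin (4+2*t) × Fin 2) → ℕ :=
    fun v => (Finset.univ.filter fun b : Fin (4+2*t) × Fin 2 => H.Adj v (Sum.inr b)).card with hcR
  have hsplit : ∀ v, Nat.card {y // H.Adj v y} = cL v + cR v := by
    intro v
    rw [natCard_eq_filter]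
    exact filter_sum_split _
  -- double counting
  have hswap : ∑ a : Fin (3+t), cR (Sum.inl a) = ∑ b : Fin (4+2*t) × Fin 2, cL (Sum.inr b) := by
    simp only [hcL, hcR, Finset.card_filter]
    rw [Finset.sum_comm]
    congr 1
    ext b
    congr 1
    ext a
    congr 1
    exact propext (SimpleGraph.adj_comm _ _ _)
  -- upper bound
  have hupper : ∑ a : Fin (3+t), cR (Sum.inl a) + 2 ≤ 2 * (3 + t) := by
    have h1 : ∑ a : Fin (3+t), (cL (Sum.inl a) + cR (Sum.inl a)) ≤ 2 * (3 + t) := by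
      calc ∑ a : Fin (3+t), (cL (Sum.inl a) + cR (Sum.inl a))
          ≤ ∑ _a : Fin (3+t), 2 := by
            apply Finset.sum_le_sum
            intro a _
            rw [← hsplit]
            exact hdeg2 _
        _ = 2 * (3 + t) := by simp [Finset.card_univ, mul_comm]
    have h2 : 2 ≤ ∑ a : Fin (3+t), cL (Sum.inl a) := by
      have hne : a0 ≠ a1 := by simp [ha0, ha1, Fin.ext_iff]
      have hsub : ({a0, a1} : Finset (Fin (3+t))) ⊆ Finset.univ := Finset.subset_univ _
      have hA : 1 ≤ cL (Sum.inl a0) :=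
        Finset.card_pos.mpr ⟨a1, Finset.mem_filter.mpr ⟨Finset.mem_univ _, hfe⟩⟩
      have hB : 1 ≤ cL (Sum.inl a1) :=
        Finset.card_pos.mpr ⟨a0, Finset.mem_filter.mpr ⟨Finset.mem_univ _, hfe.symm⟩⟩
      calc (2:ℕ) ≤ ∑ a ∈ ({a0, a1} : Finset (Fin (3+t))), cL (Sum.inl a) := by
            rw [Finset.sum_pair hne]; omega
        _ ≤ ∑ a : Fin (3+t), cL (Sum.inl a) := Finset.sum_le_sum_of_subset hsub
    rw [Finset.sum_add_distrib] at h1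
    omega
  -- lower bound
  have hpairStruct : ∀ (i : Fin (4+2*t)) (b : Fin (4+2*t) × Fin 2),
      H.Adj (Sum.inr (i, 0)) (Sum.inr b) → b = (i, 1) := by
    rintro i ⟨j, y⟩ h
    obtain ⟨h1, h2⟩ := hstruct i 0 (j, y) h
    simp only at h1 h2
    subst h1
    fin_cases y
    · exact absurd rfl h2
    · rfl
  have hpairStruct' : ∀ (i : Fin (4+2*t)) (b : Fin (4+2*t) × Fin 2),
      H.Adj (Sum.inr (i, 1)) (Sum.inr b) → b = (i, 0) := by
    rintro i ⟨j, y⟩ h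
    obtain ⟨h1, h2⟩ := hstruct i 1 (j, y) h
    simp only at h1 h2
    subst h1
    fin_cases y
    · rfl
    · exact absurd rfl h2
  have hpairLow : ∀ i : Fin (4+2*t), 1 ≤ cL (Sum.inr (i, 0)) + cL (Sum.inr (i, 1)) := by
    intro i
    by_cases hpart : H.Adj (Sum.inr (i, 0)) (Sum.inr (i, 1))
    · by_contra hcon
      push_neg at hcon
      have hL0 : cL (Sum.inr (i, 0)) = 0 := by omega
      have hL1 : cL (Sum.inr (i, 1)) = 0 := by omega
      have ha : ∀ y, H.Adj (Sum.inr (i, 0)) y → y = Sum.inr (i, 1) := by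
        rintro (a | b) h
        · exfalso
          have : a ∈ Finset.univ.filter fun a : Fin (3+t) => H.Adj (Sum.inr (i,0)) (Sum.inl a) :=
            Finset.mem_filter.mpr ⟨Finset.mem_univ _, h⟩
          rw [Finset.card_eq_zero.mp hL0] at this
          exact absurd this (Finset.notMem_empty _)
        · rw [hpairStruct i b h]
      have hb : ∀ y, H.Adj (Sum.inr (i, 1)) y → y = Sum.inr (i, 0) := by
        rintro (a | b) h
        · exfalso
          have : a ∈ Finset.univ.filter fun a : Fin (3+t) => H.Adj (Sum.inr (i,1)) (Sum.inl a) :=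
            Finset.mem_filter.mpr ⟨Finset.mem_univ _, h⟩
          rw [Finset.card_eq_zero.mp hL1] at this
          exact absurd this (Finset.notMem_empty _)
        · rw [hpairStruct' i b h]
      obtain ⟨n, hn3, ⟨φ⟩⟩ := hcomp (H.connectedComponentMk (Sum.inr (i, 0)))
      exact comp_ge_three hpart ha hb (by rw [supp_ncard φ]; exact hn3)
    · have hR0 : cR (Sum.inr (i, 0)) = 0 := by
        rw [hcR]
        simp only
        rw [Finset.card_eq_zero, Finset.filter_eq_empty_iff]
        intro b _
        intro h
        exact hpart (hpairStruct i b h ▸ h)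
      have := hdeg1 (Sum.inr (i, 0))
      rw [hsplit] at this
      omega
  have hpair0Low : 2 ≤ cL (Sum.inr (i0, 0)) + cL (Sum.inr (i0, 1)) := by
    have hR0 : cR (Sum.inr (i0, 0)) = 0 := by
      rw [hcR]; simp only
      rw [Finset.card_eq_zero, Finset.filter_eq_empty_iff]
      intro b _ h
      exact hpair0 (hpairStruct i0 b h ▸ h)
    have hR1 : cR (Sum.inr (i0, 1)) = 0 := by
      rw [hcR]; simp only
      rw [Finset.card_eq_zero, Finset.filter_eq_empty_iff]
      intro b _ h
      exact hpair0 (hpairStruct' i0 b h ▸ h).symm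
    have h0 := hdeg1 (Sum.inr (i0, 0))
    have h1 := hdeg1 (Sum.inr (i0, 1))
    rw [hsplit] at h0 h1
    omega
  have hlower : 4 + 2*t + 1 ≤ ∑ b : Fin (4+2*t) × Fin 2, cL (Sum.inr b) := by
    rw [Fintype.sum_prod_type]
    have heach : ∀ i : Fin (4+2*t),
        (if i = i0 then 2 else 1) ≤ ∑ x : Fin 2, cL (Sum.inr (i, x)) := by
      intro i
      rw [Fin.sum_univ_two]
      split_ifs with h
      · subst h; exact hpair0Low
      · exact hpairLow i
    calc 4 + 2*t + 1 = ∑ i : Fin (4+2*t), (if i = i0 then 2 else 1) := by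
          have : ∀ i : Fin (4+2*t), (if i = i0 then 2 else 1) = 1 + (if i = i0 then 1 else 0) := by
            intro i; split_ifs <;> rfl
          simp only [this, Finset.sum_add_distrib, Finset.sum_const, Finset.card_univ,
            Fintype.card_fin, smul_eq_mul, mul_one, Finset.sum_ite_eq', Finset.mem_univ, if_true]
      _ ≤ _ := Finset.sum_le_sum (fun i _ => heach i)
  rw [hswap] at hupper
  omega

/-- **Remark 1.** For every `t ≥ 0`, the graph `G = K_{3+t} ∨ ((4+2t)K₂)` satisfies
`δ(G) = 4 + t`, `α(G) = 4 + 2t` (hence `δ(G) = (α(G) + 4)/2`), but `G` is not a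
`P_{≥3}`-factor uniform graph. -/
theorem stmt4 (t : ℕ) :
    letI G := graphJoin (completeGraph (Fin (3 + t))) (mK2 (4 + 2 * t))
    @SimpleGraph.minDegree _ G _ (Classical.decRel _) = 4 + t ∧
    _root_.indepNum G = 4 + 2 * t ∧
    ((4 + t : ℝ) = ((4 + 2 * t : ℝ) + 4) / 2) ∧
    ¬ PathFactorUniform G := by
  refine ⟨aux_part1 t, aux_part2 t, ?_, aux_part4 t⟩
  ring_nf
end

section
/- Let G be a graph, let e be an edge of G, and let X be a vertex subset of G - e. Then sun(G - X) \geq sun((G - e) - X) - 2, and consequently \alpha(G) \geq sun((G - e) - X) - 2, where \alpha(G) is the independence number of G. -/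
open SimpleGraph

section Aux

open SimpleGraph

variable {V : Type*} [Fintype V] {G : SimpleGraph V} {u v : V} {X : Set V}

omit [Fintype V] in
private lemma aux_del_le :
    (G.deleteEdges {s(u, v)}).induce Xᶜ ≤ G.induce Xᶜ := by
  intro a b h
  simp only [comap_adj, Function.Embedding.coe_subtype, deleteEdges_adj] at h ⊢
  exact h.1

omit [Fintype V] in
private lemma walk_supp_mem
    {c : ((G.deleteEdges {s(u, v)}).induce Xᶜ).ConnectedComponent}
    (hc : ∀ x : (Xᶜ : Set V), x ∈ c.supp → ((x : V) ≠ u ∧ (x : V) ≠ v)) {a b : (Xᶜ : Set V)}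
    (p : (G.induce Xᶜ).Walk a b) : a ∈ c.supp → b ∈ c.supp := by
  induction p with
  | nil => exact id
  | @cons a a' b h p ih =>
    intro ha
    apply ih
    have hne : ¬ s((a : V), (a' : V)) = s(u, v) := by
      intro hs
      rcases Sym2.eq_iff.mp hs with ⟨h1, _⟩ | ⟨h1, _⟩
      · exact (hc a ha).1 h1
      · exact (hc a ha).2 h1
    have hadj : ((G.deleteEdges {s(u, v)}).induce Xᶜ).Adj a a' := by
      simp only [comap_adj, Function.Embedding.coe_subtype, deleteEdges_adj,
        Set.mem_singleton_iff]
      refine ⟨?_, hne⟩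
      simpa using h
    rw [SimpleGraph.ConnectedComponent.mem_supp_iff] at ha ⊢
    rw [← ha]
    exact (SimpleGraph.ConnectedComponent.connectedComponentMk_eq_of_adj hadj).symm

private lemma key (G : SimpleGraph V) (u v : V) (X : Set V) :
    sunCount ((G.deleteEdges {s(u, v)}).induce Xᶜ) ≤ sunCount (G.induce Xᶜ) + 2 ∧
    sunCount ((G.deleteEdges {s(u, v)}).induce Xᶜ) ≤ _root_.indepNum G + 2 := by
  classical
  set H := (G.deleteEdges {s(u, v)}).induce Xᶜ with hH
  set G' := G.induce Xᶜ with hG'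
  let P : H.ConnectedComponent → Prop :=
    fun c => ∀ x : (Xᶜ : Set V), x ∈ c.supp → ((x : V) ≠ u ∧ (x : V) ≠ v)
  let S : Type _ := {c : H.ConnectedComponent // IsSun (H.induce c.supp) ∧ P c}
  -- Step 1 : sunCount H ≤ Nat.card S + 2
  have step1 : sunCount H ≤ Nat.card S + 2 := by
    have : Nat.card {c : H.ConnectedComponent // IsSun (H.induce c.supp)} ≤
        Nat.card (S ⊕ Bool) := by
      apply Nat.card_le_card_of_injective
        (f := fun t => if h : P t.1 then Sum.inl (⟨t.1, t.2, h⟩ : S)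
          else Sum.inr (decide (∃ x : (Xᶜ : Set V), x ∈ t.1.supp ∧ (x : V) = u)))
      rintro ⟨c₁, h₁⟩ ⟨c₂, h₂⟩ heq
      simp only at heq
      by_cases hA : P c₁ <;> by_cases hB : P c₂
      · rw [dif_pos hA, dif_pos hB] at heq
        simp only [Sum.inl.injEq, Subtype.mk.injEq] at heq
        exact Subtype.ext heq
      · rw [dif_pos hA, dif_neg hB] at heq
        exact (Sum.inl_ne_inr heq).elim
      · rw [dif_neg hA, dif_pos hB] at heq
        exact (Sum.inr_ne_inl heq).elim
      · rw [dif_neg hA, dif_neg hB] at heq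
        simp only [Sum.inr.injEq, decide_eq_decide] at heq
        simp only [P, not_forall] at hA hB
        obtain ⟨a₁, ha₁, ha₁'⟩ := hA
        obtain ⟨a₂, ha₂, ha₂'⟩ := hB
        have key : ∃ w : V, (∃ x : (Xᶜ : Set V), x ∈ c₁.supp ∧ (x : V) = w) ∧
            (∃ x : (Xᶜ : Set V), x ∈ c₂.supp ∧ (x : V) = w) := by
          by_cases hu1 : ∃ x : (Xᶜ : Set V), x ∈ c₁.supp ∧ (x : V) = u
          · exact ⟨u, hu1, heq.mp hu1⟩
          · have hu2 : ¬ ∃ x : (Xᶜ : Set V), x ∈ c₂.supp ∧ (x : V) = u :=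
              fun h => hu1 (heq.mpr h)
            refine ⟨v, ⟨a₁, ha₁, ?_⟩, ⟨a₂, ha₂, ?_⟩⟩
            · rcases not_and_or.mp ha₁' with h | h
              · exact absurd ⟨a₁, ha₁, not_not.mp h⟩ hu1
              · exact not_not.mp h
            · rcases not_and_or.mp ha₂' with h | h
              · exact absurd ⟨a₂, ha₂, not_not.mp h⟩ hu2
              · exact not_not.mp h
        obtain ⟨w, ⟨x₁, hx₁, hx₁'⟩, ⟨x₂, hx₂, hx₂'⟩⟩ := key
        have hx : x₁ = x₂ := Subtype.ext (hx₁'.trans hx₂'.symm)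
        rw [SimpleGraph.ConnectedComponent.mem_supp_iff] at hx₁ hx₂
        exact Subtype.ext (hx₁.symm.trans (hx ▸ hx₂))
    calc sunCount H ≤ Nat.card (S ⊕ Bool) := this
      _ = Nat.card S + 2 := by rw [Nat.card_sum]; simp
  -- existence of representatives
  have rep : ∀ c : H.ConnectedComponent, ∃ a : (Xᶜ : Set V), a ∈ c.supp := by
    intro c
    obtain ⟨a, ha⟩ := c.exists_rep
    exact ⟨a, by rwa [SimpleGraph.ConnectedComponent.mem_supp_iff]⟩
  -- Step 2 : Nat.card S ≤ sunCount G'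
  have step2 : Nat.card S ≤ sunCount G' := by
    have hmap : ∀ t : S, ∃ d : G'.ConnectedComponent,
        IsSun (G'.induce d.supp) ∧ d.supp = t.1.supp := by
      rintro ⟨c, hsun, havoid⟩
      obtain ⟨a₀, ha₀⟩ := rep c
      have hde : (G'.connectedComponentMk a₀).supp = c.supp := by
        ext b
        simp only [SimpleGraph.ConnectedComponent.mem_supp_iff,
          SimpleGraph.ConnectedComponent.eq]
        constructor
        · intro hr
          exact (SimpleGraph.ConnectedComponent.mem_supp_iff _ _).mp
            (walk_supp_mem havoid hr.symm.some ha₀)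
        · intro hb
          rw [SimpleGraph.ConnectedComponent.mem_supp_iff] at ha₀
          exact (SimpleGraph.ConnectedComponent.exact (hb.trans ha₀.symm)).mono aux_del_le
      refine ⟨G'.connectedComponentMk a₀, ?_, hde⟩
      have hgr : G'.induce c.supp = H.induce c.supp := by
        ext x y
        simp only [hG', hH, comap_adj, Function.Embedding.coe_subtype, deleteEdges_adj,
          Set.mem_singleton_iff]
        constructor
        · intro h
          refine ⟨h, ?_⟩
          intro hs
          rcases Sym2.eq_iff.mp hs with ⟨h1, _⟩ | ⟨h1, _⟩
          · exact (havoid ↑x x.2).1 h1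
          · exact (havoid ↑x x.2).2 h1
        · exact fun h => h.1
      rw [hde, hgr]
      exact hsun
    choose f hf1 hf2 using hmap
    apply Nat.card_le_card_of_injective (f := fun t => (⟨f t, hf1 t⟩ :
      {d : G'.ConnectedComponent // IsSun (G'.induce d.supp)}))
    rintro t₁ t₂ heq
    simp only [Subtype.mk.injEq] at heq
    have hsupp : t₁.1.supp = t₂.1.supp := by rw [← hf2 t₁, ← hf2 t₂, heq]
    obtain ⟨a, ha⟩ := rep t₁.1
    have ha' := hsupp ▸ ha
    rw [SimpleGraph.ConnectedComponent.mem_supp_iff] at ha ha'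
    exact Subtype.ext (ha.symm.trans ha')
  -- Step 3 : Nat.card S ≤ indepNum G
  have step3 : Nat.card S ≤ _root_.indepNum G := by
    have hrep : ∀ t : S, ∃ a : (Xᶜ : Set V), a ∈ t.1.supp := fun t => rep t.1
    choose g hg using hrep
    set f : S → V := fun t => ↑(g t) with hf
    have hfinj : Function.Injective f := by
      intro t₁ t₂ h
      have hg12 : g t₁ = g t₂ := Subtype.ext h
      have h1 := hg t₁
      have h2 := hg t₂
      rw [hg12] at h1
      rw [SimpleGraph.ConnectedComponent.mem_supp_iff] at h1 h2
      exact Subtype.ext (h1.symm.trans h2)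
    have hindep : IndepSet G (Set.range f) := by
      rintro x ⟨t₁, rfl⟩ y ⟨t₂, rfl⟩ hxy hadj
      by_cases hs : s(f t₁, f t₂) = s(u, v)
      · rcases Sym2.eq_iff.mp hs with ⟨h1, _⟩ | ⟨h1, _⟩
        · exact (t₁.2.2 (g t₁) (hg t₁)).1 h1
        · exact (t₁.2.2 (g t₁) (hg t₁)).2 h1
      · have hadj' : H.Adj (g t₁) (g t₂) := by
          simp only [hH, comap_adj, Function.Embedding.coe_subtype, deleteEdges_adj,
            Set.mem_singleton_iff]
          exact ⟨hadj, hs⟩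
        have h1 := hg t₁
        have h2 := hg t₂
        rw [SimpleGraph.ConnectedComponent.mem_supp_iff] at h1 h2
        have hcc : t₁.1 = t₂.1 := by
          rw [← h1, ← h2]
          exact SimpleGraph.ConnectedComponent.connectedComponentMk_eq_of_adj hadj'
        exact hxy (congrArg f (Subtype.ext hcc))
    have hcard : (Set.range f).ncard = Nat.card S := by
      rw [← Nat.card_coe_set_eq]
      exact Nat.card_congr (Equiv.ofInjective f hfinj).symm
    have hbdd : BddAbove {n | ∃ A : Set V, IndepSet G A ∧ A.ncard = n} := by
      refine ⟨Fintype.card V, ?_⟩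
      rintro n ⟨A, -, rfl⟩
      calc A.ncard ≤ (Set.univ : Set V).ncard :=
            Set.ncard_le_ncard (Set.subset_univ A) Set.finite_univ
        _ = Fintype.card V := by rw [Set.ncard_univ, Nat.card_eq_fintype_card]
    exact le_csSup hbdd ⟨Set.range f, hindep, hcard⟩
  exact ⟨step1.trans (by omega), step1.trans (by omega)⟩

end Aux


/-- Deleting one edge creates at most two new sun components:
`sun(G - X) ≥ sun((G - e) - X) - 2`, and consequently
`α(G) ≥ sun((G - e) - X) - 2`. -/
theorem stmt15 {V : Type*} [Fintype V] (G : SimpleGraph V)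
    (e : Sym2 V) (he : e ∈ G.edgeSet) (X : Set V) :
    (sunCount (G.induce Xᶜ) : ℤ) ≥
      (sunCount ((G.deleteEdges {e}).induce Xᶜ) : ℤ) - 2 ∧
    (_root_.indepNum G : ℤ) ≥
      (sunCount ((G.deleteEdges {e}).induce Xᶜ) : ℤ) - 2 := by
  induction e using Sym2.ind with
  | _ u v =>
    obtain ⟨h1, h2⟩ := key G u v X
    constructor
    · omega
    · omega
end
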